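/- Let X and Y be topological spaces, let E ⊆ X be an ambiguous subset of X (both an Fσ-set and a Gδ-set in X), let Y be nonempty, and let f : E → Y be a mapping of the first Lebesgue class (with respect to the subspace topology on E). Then there exists a mapping g : X → Y of the first Lebesgue class such that g restricted to E equals f. -/
import Mathlib

/-- A set is an Fσ-set if it is a countable union of closed sets. -/
def IsFsigma {X : Type*} [TopologicalSpace X] (A : Set X) : Prop :=
  ∃ F : ℕ → Set X, (∀ n, IsClosed (F n)) ∧ A = ⋃ n, F n

/-- A mapping is of the first Lebesgue class if the preimage of every open set is Fσ. -/
def LebesgueClassOne {X Y : Type*} [TopologicalSpace X] [TopologicalSpace Y] (g : X → Y) : Prop :=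
  ∀ V : Set Y, IsOpen V → IsFsigma (g ⁻¹' V)

/-- `E` is an H₁-retract of `X` if there is a first Lebesgue class map `r : X → E`
fixing the points of `E`. -/
def IsH1Retract {X : Type*} [TopologicalSpace X] (E : Set X) : Prop :=
  ∃ r : X → E, (∀ x : E, r x = x) ∧ LebesgueClassOne r

lemma isFsigma_empty {X : Type*} [TopologicalSpace X] : IsFsigma (∅ : Set X) :=
  ⟨fun _ => ∅, fun _ => isClosed_empty, by simp⟩

lemma IsFsigma.union {X : Type*} [TopologicalSpace X] {A B : Set X}
    (hA : IsFsigma A) (hB : IsFsigma B) : IsFsigma (A ∪ B) := by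
  obtain ⟨F, hF, rfl⟩ := hA
  obtain ⟨G, hG, rfl⟩ := hB
  exact ⟨fun n => F n ∪ G n, fun n => (hF n).union (hG n),
    (Set.iUnion_union_distrib F G).symm⟩

lemma IsFsigma.iUnion_nat {X : Type*} [TopologicalSpace X] {A : ℕ → Set X}
    (hA : ∀ n, IsFsigma (A n)) : IsFsigma (⋃ n, A n) := by
  choose F hF hAF using hA
  refine ⟨fun k => F (Nat.unpair k).1 (Nat.unpair k).2, fun k => hF _ _, ?_⟩
  ext x
  simp only [Set.mem_iUnion, hAF]
  constructor
  · rintro ⟨n, m, hx⟩; exact ⟨Nat.pair n m, by simp [hx]⟩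
  · rintro ⟨k, hx⟩; exact ⟨_, _, hx⟩

lemma IsGδ.compl_isFsigma {X : Type*} [TopologicalSpace X] {E : Set X}
    (h : IsGδ E) : IsFsigma Eᶜ := by
  obtain ⟨f, hf, rfl⟩ := isGδ_iff_eq_iInter_nat.mp h
  exact ⟨fun n => (f n)ᶜ, fun n => (hf n).isClosed_compl, by
    rw [Set.compl_iInter]⟩

/-- A first Lebesgue class mapping on an ambiguous (simultaneously Fσ and Gδ) subset
extends to a first Lebesgue class mapping on the whole space. -/
theorem extend_lebesgueClassOne_of_ambiguous {X Y : Type*} [TopologicalSpace X]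
    [TopologicalSpace Y] [Nonempty Y] {E : Set X}
    (hFσ : IsFsigma E) (hGδ : IsGδ E)
    (f : E → Y) (hf : LebesgueClassOne f) :
    ∃ g : X → Y, LebesgueClassOne g ∧ ∀ x : E, g x = f x := by
  classical
  obtain ⟨y₀⟩ := ‹Nonempty Y›
  refine ⟨fun x => if h : x ∈ E then f ⟨x, h⟩ else y₀, ?_, fun x => by simp⟩
  intro V hV
  obtain ⟨C, hC, hCE⟩ := hFσ
  -- decompose preimage
  have hdecomp : (fun x => if h : x ∈ E then f ⟨x, h⟩ else y₀) ⁻¹' V =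
      (Subtype.val '' (f ⁻¹' V)) ∪ (if y₀ ∈ V then Eᶜ else ∅) := by
    ext x
    by_cases hx : x ∈ E
    · simp only [Set.mem_preimage, dif_pos hx]
      constructor
      · intro h; exact Or.inl ⟨⟨x, hx⟩, h, rfl⟩
      · rintro (⟨⟨y, hy⟩, hyV, rfl⟩ | h)
        · exact hyV
        · split at h
          · exact absurd hx h
          · exact absurd h (Set.notMem_empty x)
    · simp only [Set.mem_preimage, dif_neg hx]
      constructor
      · intro h; right; simp [h, hx]
      · rintro (⟨⟨y, hy⟩, hyV, rfl⟩ | h)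
        · exact absurd hy hx
        · split at h
          · assumption
          · exact absurd h (Set.notMem_empty x)
  rw [hdecomp]
  have h1 : IsFsigma (Subtype.val '' (f ⁻¹' V)) := by
    obtain ⟨G, hG, hGV⟩ := hf V hV
    have : Subtype.val '' (f ⁻¹' V) = ⋃ n, Subtype.val '' (G n) := by
      rw [hGV, Set.image_iUnion]
    rw [this]
    refine IsFsigma.iUnion_nat fun n => ?_
    obtain ⟨D, hD, hDG⟩ := isClosed_induced_iff.mp (hG n)
    have : (Subtype.val '' (G n) : Set X) = ⋃ m, D ∩ C m := by
      rw [← hDG, Set.image_preimage_eq_inter_range, Subtype.range_coe, hCE,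
        Set.inter_iUnion]
    rw [this]
    exact ⟨fun m => D ∩ C m, fun m => hD.inter (hC m), rfl⟩
  refine h1.union ?_
  split
  · exact hGδ.compl_isFsigma
  · exact isFsigma_empty
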